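/- Let φ : L → L' be a surjective ℤ-linear map between lattices giving a reduction of a discrete bilinear equation (so φ(vᵢ), φ(uᵢ) are ℤ≥0-linearly independent). If H' ⊂ L' is a good domain for the reduced equation, then H = φ⁻¹(H') is a good domain for the original equation, its initial domain is H₀ = φ⁻¹(H₀'), and the pulled-back solution satisfies f_h|_{X_{h₀} = X'_{φ(h₀)}} = f'_{φ(h)} for all h ∈ H; in particular the reduced equation inherits the Laurent property from the original one. -/

import Mathlib

open MvPolynomial

lemma fiber_fin {n : ℕ} {L' : Type*} [AddCommGroup L'] (pv pu : Fin n → L')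
    (hind : ∀ a b : Fin n → ℕ,
      ((∑ i, a i • pv i) + ∑ i, b i • pu i = 0) → ∀ i, a i = 0 ∧ b i = 0)
    (d : L') :
    {p : (Fin n → ℕ) × (Fin n → ℕ) |
      (∑ i, p.1 i • pv i) + ∑ i, p.2 i • pu i = d}.Finite := by
  rw [← Set.not_infinite]
  intro hinf
  have e := hinf.natEmbedding
  have hpwo : (Set.univ : Set ((Fin n → ℕ) × (Fin n → ℕ))).IsPWO := by
    rw [← Set.univ_prod_univ]
    have h1 : (Set.univ : Set (Fin n → ℕ)).IsPWO := Set.isPWO_of_wellQuasiOrderedLE _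
    exact h1.prod h1
  obtain ⟨m, m', hlt, hle⟩ := hpwo.exists_lt (f := fun j => (e j : (Fin n → ℕ) × (Fin n → ℕ)))
    (fun j => Set.mem_univ _)
  set x := (e m : (Fin n → ℕ) × (Fin n → ℕ)) with hx
  set y := (e m' : (Fin n → ℕ) × (Fin n → ℕ)) with hy
  have hle1 : ∀ i, x.1 i ≤ y.1 i := fun i => hle.1 i
  have hle2 : ∀ i, x.2 i ≤ y.2 i := fun i => hle.2 i
  have hxd : (∑ i, x.1 i • pv i) + ∑ i, x.2 i • pu i = d := (e m).2
  have hyd : (∑ i, y.1 i • pv i) + ∑ i, y.2 i • pu i = d := (e m').2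
  set q1 : Fin n → ℕ := fun i => y.1 i - x.1 i with hq1
  set q2 : Fin n → ℕ := fun i => y.2 i - x.2 i with hq2
  have hzero : (∑ i, q1 i • pv i) + ∑ i, q2 i • pu i = 0 := by
    have h1 : ∀ i, y.1 i • pv i = x.1 i • pv i + q1 i • pv i := by
      intro i; rw [← add_smul, Nat.add_sub_cancel' (hle1 i)]
    have h2 : ∀ i, y.2 i • pu i = x.2 i • pu i + q2 i • pu i := by
      intro i; rw [← add_smul, Nat.add_sub_cancel' (hle2 i)]
    have hthis := hyd
    rw [Finset.sum_congr rfl (fun i _ => h1 i), Finset.sum_congr rfl (fun i _ => h2 i),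
      Finset.sum_add_distrib, Finset.sum_add_distrib] at hthis
    have h3 := hxd
    linear_combination (norm := abel_nf) hthis - h3
  have hq := hind q1 q2 hzero
  have hxy : x = y := by
    ext i
    · exact le_antisymm (hle1 i) (Nat.le_of_sub_eq_zero (hq i).1)
    · exact le_antisymm (hle2 i) (Nat.le_of_sub_eq_zero (hq i).2)
  exact absurd (e.injective (Subtype.ext hxy)) hlt.ne


/-- A good domain for a discrete bilinear equation with shift vectors `v i, u i`. -/
def IsGoodDomain {L : Type*} [AddCommGroup L] {n : ℕ} (v u : Fin n → L)
    (H : Set L) : Prop :=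
  H.Nonempty ∧
  (∀ h ∈ H, {g ∈ H | ∃ a b : Fin n → ℕ,
      g = h + (∑ i, a i • v i) + ∑ i, b i • u i}.Finite) ∧
  (∀ h ∈ H, ∀ a b : Fin n → ℕ, h - (∑ i, a i • v i) - (∑ i, b i • u i) ∈ H)

/-- Reductions preserve the Laurent property: if `φ : L → L'` is a
surjective `ℤ`-linear reduction of a discrete bilinear equation and `H'` is a good
domain for the reduced equation, then `H = φ⁻¹(H')` is a good domain for the original
equation with initial domain `φ⁻¹(H₀')`, the pulled-back solution (with initial values
`X' (φ h₀)`) satisfies `f h = f' (φ h)`, and the reduced equation inherits the Laurent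
property from the original one. -/
theorem reduction_preserves_laurent_property
    (k : Type*) [Field k]
    (L L' : Type*) [AddCommGroup L] [AddCommGroup L']
    [Module.Free ℤ L] [Module.Finite ℤ L]
    [Module.Free ℤ L'] [Module.Finite ℤ L']
    (n : ℕ) (v u : Fin n → L) (w : L) (hw : ∀ i, v i + u i = w)
    (φ : L →+ L') (hsurj : Function.Surjective φ)
    (hind : ∀ a b : Fin n → ℕ,
      ((∑ i, a i • φ (v i)) + ∑ i, b i • φ (u i) = 0) → ∀ i, a i = 0 ∧ b i = 0)
    (hdistinct : ∀ i j, i ≠ j →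
      φ (v i) ≠ φ (v j) ∧ φ (u i) ≠ φ (u j) ∧ φ (v i) ≠ φ (u j))
    (α : Fin n → L → k) (hα : ∀ i h, α i h ≠ 0)
    (hker : ∀ i (h g : L), φ g = 0 → α i (h + g) = α i h)
    (α' : Fin n → L' → k) (hα' : ∀ i h, α' i (φ h) = α i h)
    (H' H₀' : Set L')
    (hgood' : IsGoodDomain (fun i => φ (v i)) (fun i => φ (u i)) H')
    (hH₀' : H₀' = {h' ∈ H' | h' + φ w ∉ H'})
    (x' : L' → FractionRing (MvPolynomial L' k))
    (hx' : ∀ h', x' h' = algebraMap (MvPolynomial L' k) _ (X h'))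
    (cst : k → FractionRing (MvPolynomial L' k))
    (hcst : ∀ c, cst c = algebraMap (MvPolynomial L' k) _ (C c))
    (f' : L' → FractionRing (MvPolynomial L' k))
    (hinit' : ∀ h' ∈ H₀', f' h' = x' h')
    (hne' : ∀ h' ∈ H', f' h' ≠ 0)
    (hrec' : ∀ h' ∈ H', h' ∉ H₀' →
      f' h' * f' (h' + φ w)
        = ∑ i, cst (α' i h') * f' (h' + φ (v i)) * f' (h' + φ (u i)))
    (f : L → FractionRing (MvPolynomial L' k))
    (hinit : ∀ h ∈ φ ⁻¹' H', h + w ∉ φ ⁻¹' H' → f h = x' (φ h))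
    (hne : ∀ h ∈ φ ⁻¹' H', f h ≠ 0)
    (hrec : ∀ h ∈ φ ⁻¹' H', h + w ∈ φ ⁻¹' H' →
      f h * f (h + w) = ∑ i, cst (α i h) * f (h + v i) * f (h + u i)) :
    IsGoodDomain v u (φ ⁻¹' H') ∧
    {h ∈ φ ⁻¹' H' | h + w ∉ φ ⁻¹' H'} = φ ⁻¹' H₀' ∧
    (∀ h ∈ φ ⁻¹' H', f h = f' (φ h)) ∧
    ((∀ h ∈ φ ⁻¹' H', f h ∈ Algebra.adjoin k
        {z : FractionRing (MvPolynomial L' k) |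
          ∃ h₀' ∈ H₀', z = x' h₀' ∨ z = (x' h₀')⁻¹}) →
      ∀ h' ∈ H', f' h' ∈ Algebra.adjoin k
        {z : FractionRing (MvPolynomial L' k) |
          ∃ h₀' ∈ H₀', z = x' h₀' ∨ z = (x' h₀')⁻¹}) := by
  -- push φ through the shifted sums
  have hφsum : ∀ (h : L) (a b : Fin n → ℕ),
      φ (h + (∑ i, a i • v i) + ∑ i, b i • u i)
        = φ h + (∑ i, a i • φ (v i)) + ∑ i, b i • φ (u i) := by
    intro h a b
    simp [map_add, map_sum, map_nsmul]
  -- finiteness of forward cones in L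
  have hS : ∀ h ∈ φ ⁻¹' H', {g ∈ φ ⁻¹' H' | ∃ a b : Fin n → ℕ,
      g = h + (∑ i, a i • v i) + ∑ i, b i • u i}.Finite := by
    intro h hh
    have hF : {g' ∈ H' | ∃ a b : Fin n → ℕ,
        g' = φ h + (∑ i, a i • φ (v i)) + ∑ i, b i • φ (u i)}.Finite :=
      hgood'.2.1 (φ h) hh
    have hF2 : ((fun x => x - φ h) ''
        {g' ∈ H' | ∃ a b : Fin n → ℕ,
          g' = φ h + (∑ i, a i • φ (v i)) + ∑ i, b i • φ (u i)}).Finite :=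
      hF.image _
    have hP : {p : (Fin n → ℕ) × (Fin n → ℕ) |
        (∑ i, p.1 i • φ (v i)) + ∑ i, p.2 i • φ (u i) ∈ (fun x => x - φ h) ''
          {g' ∈ H' | ∃ a b : Fin n → ℕ,
            g' = φ h + (∑ i, a i • φ (v i)) + ∑ i, b i • φ (u i)}}.Finite := by
      refine Set.Finite.subset (hF2.biUnion (fun d _ => fiber_fin _ _ hind d)) ?_
      intro p hp
      exact Set.mem_biUnion hp rfl
    refine Set.Finite.subset
      (hP.image (fun p => h + (∑ i, p.1 i • v i) + ∑ i, p.2 i • u i)) ?_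
    rintro g ⟨hg, a, b, rfl⟩
    refine ⟨(a, b), ?_, rfl⟩
    refine ⟨φ h + (∑ i, a i • φ (v i)) + ∑ i, b i • φ (u i), ⟨?_, a, b, rfl⟩, by abel⟩
    rw [← hφsum]
    exact hg
  -- part 1
  have good : IsGoodDomain v u (φ ⁻¹' H') := by
    obtain ⟨h0', hh0'⟩ := hgood'.1
    obtain ⟨h0, rfl⟩ := hsurj h0'
    refine ⟨⟨h0, hh0'⟩, hS, ?_⟩
    intro h hh a b
    have hcl := hgood'.2.2 (φ h) hh a b
    simp only [Set.mem_preimage, map_sub, map_sum, map_nsmul]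
    exact hcl
  -- part 2
  have part2 : {h ∈ φ ⁻¹' H' | h + w ∉ φ ⁻¹' H'} = φ ⁻¹' H₀' := by
    ext h
    simp [hH₀', Set.mem_preimage, map_add]
  -- part 3
  set S : L → Set L := fun h => {g ∈ φ ⁻¹' H' | ∃ a b : Fin n → ℕ,
      g = h + (∑ i, a i • v i) + ∑ i, b i • u i} with hSdef
  have hself : ∀ h ∈ φ ⁻¹' H', h ∈ S h := by
    intro h hh
    exact ⟨hh, 0, 0, by simp⟩
  have hstep : ∀ h ∈ φ ⁻¹' H', ∀ g, (∃ a b : Fin n → ℕ, (a ≠ 0 ∨ b ≠ 0) ∧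
      g = h + (∑ i, a i • v i) + ∑ i, b i • u i) → (S g).ncard < (S h).ncard := by
    rintro h hh g ⟨a, b, hab, rfl⟩
    refine Set.ncard_lt_ncard ⟨?_, ?_⟩ (hS h hh)
    · rintro z ⟨hz, a', b', rfl⟩
      refine ⟨hz, a + a', b + b', ?_⟩
      simp only [Pi.add_apply, add_smul, Finset.sum_add_distrib]
      abel
    · intro hsub
      obtain ⟨-, a', b', heq⟩ := hsub (hself h hh)
      have hφeq := congrArg φ heq
      rw [hφsum, hφsum] at hφeq
      have h0 : (∑ i, (a + a') i • φ (v i)) + ∑ i, (b + b') i • φ (u i) = 0 := by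
        simp only [Pi.add_apply, add_smul, Finset.sum_add_distrib]
        have : φ h = φ h + ((∑ i, a i • φ (v i)) + (∑ i, a' i • φ (v i))
            + ((∑ i, b i • φ (u i)) + (∑ i, b' i • φ (u i)))) := by
          nth_rewrite 1 [hφeq]
          abel
        have h1 := (left_eq_add.mp this)
        linear_combination (norm := abel_nf) h1
      have hz := hind _ _ h0
      rcases hab with hab | hab
      · refine hab (_root_.funext fun i => ?_)
        have h2 := (hz i).1
        simp only [Pi.add_apply] at h2
        simp only [Pi.zero_apply]
        omega
      · refine hab (_root_.funext fun i => ?_)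
        have h2 := (hz i).2
        simp only [Pi.add_apply] at h2
        simp only [Pi.zero_apply]
        omega
  have hsingle : ∀ {M : Type _} [AddCommMonoid M] (c : Fin n → M) (i : Fin n),
      ∑ j, (Pi.single i 1 : Fin n → ℕ) j • c j = c i := by
    intro M _ c i
    rw [Finset.sum_eq_single i]
    · simp
    · intro j _ hj
      simp [Pi.single_apply, hj]
    · simp
  have key : ∀ N : ℕ, ∀ h, h ∈ φ ⁻¹' H' → (S h).ncard ≤ N → f h = f' (φ h) := by
    intro N
    induction N with
    | zero =>
      intro h hh hcard
      have hpos : 0 < (S h).ncard := (Set.ncard_pos (hS h hh)).mpr ⟨h, hself h hh⟩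
      omega
    | succ N ih =>
      intro h hh hcard
      by_cases hw' : h + w ∈ φ ⁻¹' H'
      · rcases Nat.eq_zero_or_pos n with hn | hn
        · -- n = 0 : contradiction with nonvanishing
          have hrech := hrec h hh hw'
          have huniv : (Finset.univ : Finset (Fin n)) = ∅ := by
            subst hn; rfl
          rw [huniv, Finset.sum_empty] at hrech
          exact absurd hrech (mul_ne_zero (hne h hh) (hne _ hw'))
        · have i0 : Fin n := ⟨0, hn⟩
          have hwi : ∀ i : Fin n, h + w
              = h + (∑ j, (Pi.single i 1 : Fin n → ℕ) j • v j)
                + ∑ j, (Pi.single i 1 : Fin n → ℕ) j • u j := by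
            intro i
            rw [hsingle v i, hsingle u i, ← hw i]
            abel
          have hvi : ∀ i : Fin n, h + v i
              = h + (∑ j, (Pi.single i 1 : Fin n → ℕ) j • v j)
                + ∑ j, ((0 : Fin n → ℕ)) j • u j := by
            intro i; rw [hsingle v i]; simp
          have hui : ∀ i : Fin n, h + u i
              = h + (∑ j, ((0 : Fin n → ℕ)) j • v j)
                + ∑ j, (Pi.single i 1 : Fin n → ℕ) j • u j := by
            intro i; rw [hsingle u i]; simp
          have hsne : ∀ i : Fin n, (Pi.single i 1 : Fin n → ℕ) ≠ 0 := by
            intro i hcon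
            have := congrFun hcon i
            simp at this
          -- memberships
          have hmemv : ∀ i : Fin n, h + v i ∈ φ ⁻¹' H' := by
            intro i
            have hcl := good.2.2 (h + w) hw' 0 (Pi.single i 1)
            have : h + w - (∑ j, ((0 : Fin n → ℕ)) j • v j)
                - ∑ j, (Pi.single i 1 : Fin n → ℕ) j • u j = h + v i := by
              rw [hsingle u i]
              simp only [Pi.zero_apply, zero_smul, Finset.sum_const_zero, sub_zero]
              rw [← hw i]
              abel
            rwa [this] at hcl
          have hmemu : ∀ i : Fin n, h + u i ∈ φ ⁻¹' H' := by
            intro i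
            have hcl := good.2.2 (h + w) hw' (Pi.single i 1) 0
            have : h + w - (∑ j, (Pi.single i 1 : Fin n → ℕ) j • v j)
                - ∑ j, ((0 : Fin n → ℕ)) j • u j = h + u i := by
              rw [hsingle v i]
              simp only [Pi.zero_apply, zero_smul, Finset.sum_const_zero, sub_zero]
              rw [← hw i]
              abel
            rwa [this] at hcl
          -- inductive hypotheses
          have ihw : f (h + w) = f' (φ (h + w)) := by
            refine ih _ hw' ?_
            have := hstep h hh (h + w) ⟨Pi.single i0 1, Pi.single i0 1,
              Or.inl (hsne i0), hwi i0⟩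
            omega
          have ihv : ∀ i : Fin n, f (h + v i) = f' (φ (h + v i)) := by
            intro i
            refine ih _ (hmemv i) ?_
            have := hstep h hh (h + v i) ⟨Pi.single i 1, 0, Or.inl (hsne i), hvi i⟩
            omega
          have ihu : ∀ i : Fin n, f (h + u i) = f' (φ (h + u i)) := by
            intro i
            refine ih _ (hmemu i) ?_
            have := hstep h hh (h + u i) ⟨0, Pi.single i 1, Or.inr (hsne i), hui i⟩
            omega
          -- the recurrences
          have hφh : φ h ∈ H' := hh
          have hφhw : φ h + φ w ∈ H' := by
            have := hw'
            rwa [Set.mem_preimage, map_add] at this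
          have hφhn : φ h ∉ H₀' := by
            rw [hH₀']
            rintro ⟨-, hcon⟩
            exact hcon hφhw
          have hrech := hrec h hh hw'
          have hrech' := hrec' (φ h) hφh hφhn
          have hmain : f h * f (h + w) = f' (φ h) * f (h + w) := by
            rw [hrech, ihw, map_add, hrech']
            refine Finset.sum_congr rfl fun i _ => ?_
            rw [ihv i, ihu i, hα' i h, map_add, map_add]
          exact mul_right_cancel₀ (hne _ hw') hmain
      · -- base case : initial values
        have hφh0 : φ h ∈ H₀' := by
          rw [hH₀']
          refine ⟨hh, fun hcon => hw' ?_⟩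
          rwa [Set.mem_preimage, map_add]
        rw [hinit h hh hw', hinit' (φ h) hφh0]
  have part3 : ∀ h ∈ φ ⁻¹' H', f h = f' (φ h) := fun h hh => key (S h).ncard h hh le_rfl
  refine ⟨good, part2, part3, ?_⟩
  intro hL h' hh'
  obtain ⟨h, rfl⟩ := hsurj h'
  rw [← part3 h hh']
  exact hL h hh'
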